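/- Let n⁰, n¹ ∈ (ℝ³)^k with |n⁰ᵢ| = 1 for all i, τ > 0, m = (n⁰+n¹)/2, and suppose (n¹ − n⁰)/τ = −mᵢ × (Dᵢ × mᵢ) componentwise for some D ∈ (ℝ³)^k. Then |n¹ᵢ| = 1 for all i, and moreover n¹ᵢ · n⁰ᵢ = 2|mᵢ|² − 1. -/

import Mathlib

open scoped RealInnerProductSpace

noncomputable def cross3 (a b : EuclideanSpace ℝ (Fin 3)) : EuclideanSpace ℝ (Fin 3) :=
  WithLp.toLp 2 (crossProduct a b)

lemma cross3_inner_left (a b : EuclideanSpace ℝ (Fin 3)) : ⟪cross3 a b, a⟫ = 0 := by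
  simp [cross3, crossProduct, PiLp.inner_apply, Fin.sum_univ_three]
  ring

theorem discrete_rotational_unit_length_and_midpoint
    {k : ℕ} (n0 n1 D m : Fin k → EuclideanSpace ℝ (Fin 3)) (τ : ℝ) (hτ : 0 < τ)
    (hn0 : ∀ i, ‖n0 i‖ = 1)
    (hm : ∀ i, m i = (2⁻¹ : ℝ) • (n0 i + n1 i))
    (hupd : ∀ i, τ⁻¹ • (n1 i - n0 i) = -(cross3 (m i) (cross3 (D i) (m i)))) :
    (∀ i, ‖n1 i‖ = 1) ∧ ∀ i, ⟪n1 i, n0 i⟫ = 2 * ‖m i‖ ^ 2 - 1 := by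
  have horth : ∀ i, ⟪n1 i - n0 i, m i⟫ = 0 := by
    intro i
    have h := congrArg (fun v => ⟪v, m i⟫) (hupd i)
    simp only [inner_smul_left, inner_neg_left, cross3_inner_left, neg_zero,
      RCLike.conj_to_real] at h
    have hτ' : τ⁻¹ ≠ 0 := inv_ne_zero hτ.ne'
    exact (mul_eq_zero.mp h).resolve_left hτ'
  have hkey : ∀ i, ⟪n1 i - n0 i, n0 i + n1 i⟫ = 0 := by
    intro i
    have h := horth i
    rw [hm i, real_inner_smul_right] at h
    have : (2⁻¹ : ℝ) ≠ 0 := by norm_num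
    exact (mul_eq_zero.mp h).resolve_left this
  have hnorm : ∀ i, ‖n1 i‖ = 1 := by
    intro i
    have h := hkey i
    rw [inner_sub_left, inner_add_right, inner_add_right] at h
    rw [real_inner_comm (n1 i) (n0 i)] at h
    have h2 : ⟪n1 i, n1 i⟫ = ⟪n0 i, n0 i⟫ := by linarith
    rw [real_inner_self_eq_norm_sq, real_inner_self_eq_norm_sq] at h2
    have := hn0 i
    nlinarith [norm_nonneg (n1 i)]
  refine ⟨hnorm, fun i => ?_⟩
  have hmn : ‖m i‖ ^ 2 = ⟪m i, m i⟫ := (real_inner_self_eq_norm_sq _).symm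
  rw [hmn, hm i, real_inner_smul_left, real_inner_smul_right,
    inner_add_left, inner_add_right, inner_add_right,
    real_inner_self_eq_norm_sq, real_inner_self_eq_norm_sq, hn0 i, hnorm i,
    real_inner_comm (n0 i) (n1 i)]
  ring
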